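/- Let P be a polynomial of degree at most N on ℝ^n. Then for every ε ∈ (0,1], the Lebesgue measure of the sublevel set {t ∈ [-1,1]^n : |P(t)| < ε · sup_{[-1,1]^n} |P|} is at most C_N ε^{1/C_N}, where C_N depends only on N and n. -/

import Mathlib

open MeasureTheory


/-- Greedy selection of `k+1` points in a set of large measure, pairwise `d`-separated. -/
lemma exists_separated (a b d : ℝ) (hd : 0 < d) :
    ∀ (k : ℕ) (S : Set ℝ), MeasurableSet S → S ⊆ Set.Icc a b →
      (k : ℝ) * d < (volume S).toReal →
      ∃ t : Finset ℝ, t.card = k + 1 ∧ (↑t ⊆ S) ∧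
        (∀ x ∈ t, ∀ y ∈ t, x ≠ y → d ≤ |x - y|) := by
  intro k
  induction k with
  | zero =>
    intro S hSm hSsub hvol
    have h0 : volume S ≠ 0 := by
      intro h; rw [h] at hvol; simp at hvol
    obtain ⟨x, hx⟩ := nonempty_of_measure_ne_zero h0
    exact ⟨{x}, by simp, by simpa using hx, by intro u hu v hv huv; simp_all⟩
  | succ k ih =>
    intro S hSm hSsub hvol
    have hfin : volume S ≠ ⊤ :=
      ((measure_mono hSsub).trans_lt (by simp [Real.volume_Icc])).ne
    set m : ℝ := (volume S).toReal with hm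
    have h0 : volume S ≠ 0 := by
      intro h
      have hm0 : m = 0 := by rw [hm, h]; simp
      have hk : (0:ℝ) ≤ (k:ℝ) := Nat.cast_nonneg k
      push_cast at hvol
      nlinarith
    set T : Set ℝ := {x : ℝ | volume (S ∩ Set.Iio x) = 0} with hT
    have haT : a ∈ T := by
      have : S ∩ Set.Iio a = ∅ := by
        ext x; simp only [Set.mem_inter_iff, Set.mem_Iio, Set.mem_empty_iff_false, iff_false]
        rintro ⟨hxS, hxa⟩; exact absurd (hSsub hxS).1 (not_le.2 hxa)
      simp [hT, this]
    have hbddT : BddAbove T := by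
      refine ⟨b, fun x hx => ?_⟩
      by_contra hxb
      push_neg at hxb
      have : S ∩ Set.Iio x = S := by
        apply Set.inter_eq_left.2
        intro y hy; exact lt_of_le_of_lt (hSsub hy).2 hxb
      rw [hT] at hx; simp only [Set.mem_setOf_eq, this] at hx
      exact h0 hx
    set u : ℝ := sSup T with hu
    have h1 : volume (S ∩ Set.Iio u) = 0 := by
      have hsub : S ∩ Set.Iio u ⊆ ⋃ j : ℕ, S ∩ Set.Iio (u - 1/(j+1)) := by
        rintro x ⟨hxS, hxu⟩
        obtain ⟨j, hj⟩ := exists_nat_one_div_lt (show (0:ℝ) < u - x from sub_pos.2 hxu)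
        exact Set.mem_iUnion.2 ⟨j, hxS, Set.mem_Iio.2 (by linarith)⟩
      refine measure_mono_null hsub (measure_iUnion_null fun j => ?_)
      obtain ⟨t, htT, ht⟩ := exists_lt_of_lt_csSup ⟨a, haT⟩
        (show u - 1/(j+1) < u by
          have : (0:ℝ) < 1/(j+1) := by positivity
          linarith)
      exact measure_mono_null (Set.inter_subset_inter_right _ (Set.Iio_subset_Iio ht.le)) htT
    set σ : ℝ := (m - (k+1)*d)/2 with hσ
    have hσpos : 0 < σ := by
      rw [hσ]; push_cast at hvol ⊢; linarith
    have h2 : volume (S ∩ Set.Iio (u + σ)) ≠ 0 := by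
      intro h
      have : u + σ ∈ T := h
      have := le_csSup hbddT this
      linarith
    obtain ⟨y₀, hy₀S, hy₀lt⟩ := nonempty_of_measure_ne_zero h2
    set S' : Set ℝ := S ∩ Set.Ici (y₀ + d) with hS'
    have hS'm : MeasurableSet S' := hSm.inter measurableSet_Ici
    have hS'sub : S' ⊆ Set.Icc a b := fun x hx => hSsub hx.1
    have hS'fin : volume S' ≠ ⊤ := ((measure_mono Set.inter_subset_left).trans_lt
      (lt_top_iff_ne_top.2 hfin)).ne
    have hvol' : (k : ℝ) * d < (volume S').toReal := by
      have hcover : S ⊆ (S ∩ Set.Iio (y₀ + d)) ∪ S' := by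
        intro x hx
        rcases lt_or_ge x (y₀ + d) with h | h
        · exact Or.inl ⟨hx, h⟩
        · exact Or.inr ⟨hx, h⟩
      have hbound : volume (S ∩ Set.Iio (y₀ + d)) ≤ ENNReal.ofReal (d + σ) := by
        have hsub2 : S ∩ Set.Iio (y₀ + d) ⊆ (S ∩ Set.Iio u) ∪ Set.Ico u (y₀ + d) := by
          rintro x ⟨hxS, hxlt⟩
          rcases lt_or_ge x u with h | h
          · exact Or.inl ⟨hxS, h⟩
          · exact Or.inr ⟨h, hxlt⟩
        calc volume (S ∩ Set.Iio (y₀ + d)) ≤ volume (S ∩ Set.Iio u) + volume (Set.Ico u (y₀ + d)) :=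
              (measure_mono hsub2).trans (measure_union_le _ _)
          _ = volume (Set.Ico u (y₀ + d)) := by rw [h1, zero_add]
          _ ≤ ENNReal.ofReal (d + σ) := by
              rw [Real.volume_Ico]
              have hy₀lt' : y₀ < u + σ := hy₀lt
              exact ENNReal.ofReal_le_ofReal (by linarith)
      have hle : volume S ≤ ENNReal.ofReal (d + σ) + volume S' :=
        (measure_mono hcover).trans ((measure_union_le _ _).trans (add_le_add hbound le_rfl))
      have := ENNReal.toReal_mono (by
        exact ENNReal.add_ne_top.2 ⟨ENNReal.ofReal_ne_top, hS'fin⟩) hle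
      rw [ENNReal.toReal_add ENNReal.ofReal_ne_top hS'fin,
        ENNReal.toReal_ofReal (by positivity)] at this
      push_cast at hvol
      have hm' : m ≤ (d + σ) + (volume S').toReal := this
      have : m = (k+1)*d + 2*σ := by rw [hσ]; ring
      linarith
    obtain ⟨t', ht'card, ht'sub, ht'sep⟩ := ih S' hS'm hS'sub hvol'
    have hy₀notin : y₀ ∉ t' := by
      intro h
      have := (ht'sub h).2
      simp only [Set.mem_Ici] at this
      linarith
    refine ⟨insert y₀ t', ?_, ?_, ?_⟩
    · rw [Finset.card_insert_of_notMem hy₀notin, ht'card]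
    · intro x hx
      simp only [Finset.coe_insert, Set.mem_insert_iff] at hx
      rcases hx with rfl | hx
      · exact hy₀S
      · exact (ht'sub hx).1
    · intro x hx y hy hxy
      simp only [Finset.mem_insert] at hx hy
      rcases hx with rfl | hx <;> rcases hy with rfl | hy
      · exact absurd rfl hxy
      · have := (ht'sub hy).2; simp only [Set.mem_Ici] at this
        rw [abs_sub_comm]; rw [abs_of_nonneg (by linarith)]; linarith
      · have := (ht'sub hx).2; simp only [Set.mem_Ici] at this
        rw [abs_of_nonneg (by linarith)]; linarith
      · exact ht'sep x hx y hy hxy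

lemma remez1d (N : ℕ) (hN : 1 ≤ N) (q : Polynomial ℝ) (hq : q.natDegree ≤ N)
    (a b x₀ : ℝ) (hx₀ : x₀ ∈ Set.Icc a b) (ε : ℝ) (hε : 0 < ε) :
    volume {x | x ∈ Set.Icc a b ∧ |q.eval x| < ε * |q.eval x₀|} ≤
      ENNReal.ofReal (((N:ℝ)+1)^2 * (b - a) * ε ^ ((1:ℝ)/(N:ℝ))) := by
  have hab : a ≤ b := hx₀.1.trans hx₀.2
  set M₀ : ℝ := |q.eval x₀| with hM₀
  rcases eq_or_lt_of_le (abs_nonneg (q.eval x₀)) with h0 | h0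
  · have : {x | x ∈ Set.Icc a b ∧ |q.eval x| < ε * M₀} = ∅ := by
      ext x
      simp only [Set.mem_setOf_eq, Set.mem_empty_iff_false, iff_false, not_and]
      intro _
      have : ε * M₀ = 0 := by rw [hM₀, ← h0, mul_zero]
      rw [this]
      exact not_lt.2 (abs_nonneg _)
    rw [this]
    simp
  set S : Set ℝ := {x | x ∈ Set.Icc a b ∧ |q.eval x| < ε * M₀} with hS
  have hSm : MeasurableSet S := by
    have : S = Set.Icc a b ∩ (fun x => |q.eval x|) ⁻¹' Set.Iio (ε * M₀) := by
      ext x; simp only [hS, Set.mem_setOf_eq, Set.mem_inter_iff, Set.mem_preimage, Set.mem_Iio]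
    rw [this]
    exact measurableSet_Icc.inter
      ((continuous_abs.comp q.continuous).measurable measurableSet_Iio)
  have hSsub : S ⊆ Set.Icc a b := fun x hx => hx.1
  have hfin : volume S ≠ ⊤ :=
    ((measure_mono hSsub).trans_lt (by simp [Real.volume_Icc])).ne
  set R : ℝ := ((N:ℝ)+1)^2 * (b - a) * ε ^ ((1:ℝ)/(N:ℝ)) with hR
  have hRnn : 0 ≤ R := by
    have : (0:ℝ) ≤ ε ^ ((1:ℝ)/(N:ℝ)) := Real.rpow_nonneg hε.le _
    have hba : (0:ℝ) ≤ b - a := by linarith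
    positivity
  by_contra hcon
  push_neg at hcon
  have hm : R < (volume S).toReal :=
    (ENNReal.ofReal_lt_iff_lt_toReal hRnn hfin).1 hcon
  set m : ℝ := (volume S).toReal with hmdef
  have hmpos : 0 < m := lt_of_le_of_lt hRnn hm
  set d : ℝ := m / ((N:ℝ)+1) with hd
  have hdpos : 0 < d := by positivity
  have hNd : (N:ℝ) * d < m := by
    rw [hd]
    rw [mul_div_assoc']
    rw [div_lt_iff₀ (by positivity)]
    nlinarith
  obtain ⟨t, htcard, htsub, htsep⟩ := exists_separated a b d hdpos N S hSm hSsub hNd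
  have hinj : Set.InjOn id (↑t : Set ℝ) := Function.injective_id.injOn
  have hdeg : q.degree < (t.card : ℕ) := by
    rw [htcard]
    calc q.degree ≤ (q.natDegree : WithBot ℕ) := Polynomial.degree_le_natDegree
      _ < ((N + 1 : ℕ) : WithBot ℕ) := by exact_mod_cast Nat.lt_succ_of_le hq
  have hinterp := Lagrange.eq_interpolate (v := id) hinj hdeg
  -- bound on the basis polynomials
  have hbasis : ∀ i ∈ t, |Polynomial.eval x₀ (Lagrange.basis t id i)| ≤ ((b-a)/d)^N := by
    intro i hi
    rw [Lagrange.basis, Polynomial.eval_prod, Finset.abs_prod]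
    have hcard : (t.erase i).card = N := by rw [Finset.card_erase_of_mem hi, htcard]; omega
    calc ∏ j ∈ t.erase i, |Polynomial.eval x₀ (Lagrange.basisDivisor (id i) (id j))|
        ≤ ∏ j ∈ t.erase i, (b-a)/d := by
          apply Finset.prod_le_prod (fun _ _ => abs_nonneg _)
          intro j hj
          have hji : j ∈ t := Finset.mem_of_mem_erase hj
          have hne : i ≠ j := (Finset.ne_of_mem_erase hj).symm
          have hsep := htsep i hi j hji hne
          have hxj : |x₀ - j| ≤ b - a := by
            have h1 := (hSsub (htsub hji)).1
            have h2 := (hSsub (htsub hji)).2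
            rw [abs_le]
            constructor <;> [linarith [hx₀.1, hx₀.2]; linarith [hx₀.1, hx₀.2]]
          have : Polynomial.eval x₀ (Lagrange.basisDivisor (id i) (id j)) =
              (i - j)⁻¹ * (x₀ - j) := by
            simp [Lagrange.basisDivisor]
          rw [this, abs_mul, abs_inv, inv_mul_eq_div]
          exact div_le_div₀ (by linarith) hxj hdpos hsep
        _ = ((b-a)/d)^N := by rw [Finset.prod_const, hcard]
  have hkey : M₀ ≤ ((N:ℝ)+1) * (ε * M₀ * ((b-a)/d)^N) := by
    calc M₀ = |∑ i ∈ t, Polynomial.eval (id i) q * Polynomial.eval x₀ (Lagrange.basis t id i)| := by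
          conv_lhs => rw [hM₀, hinterp]
          rw [Lagrange.interpolate_apply, Polynomial.eval_finset_sum]
          simp only [Polynomial.eval_mul, Polynomial.eval_C]
      _ ≤ ∑ i ∈ t, |Polynomial.eval (id i) q * Polynomial.eval x₀ (Lagrange.basis t id i)| :=
          Finset.abs_sum_le_sum_abs _ _
      _ ≤ ∑ _i ∈ t, (ε * M₀) * ((b-a)/d)^N := by
          apply Finset.sum_le_sum
          intro i hi
          rw [abs_mul]
          have hiS : i ∈ S := htsub (Finset.mem_coe.2 hi)
          have h1 : |Polynomial.eval (id i) q| ≤ ε * M₀ := le_of_lt hiS.2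
          exact mul_le_mul h1 (hbasis i hi) (abs_nonneg _) (by positivity)
      _ = ((N:ℝ)+1) * (ε * M₀ * ((b-a)/d)^N) := by
          rw [Finset.sum_const, htcard, nsmul_eq_mul]; push_cast; ring
  have hM₀pos : 0 < M₀ := h0
  have h1 : (1:ℝ) ≤ ((N:ℝ)+1) * ε * ((b-a)/d)^N := by
    nlinarith [hkey, hM₀pos]
  have hP : ((b-a)/d)^N = ((b-a)*((N:ℝ)+1))^N / m^N := by
    rw [hd, div_div_eq_mul_div, div_pow]
  have h2 : m^N ≤ ((N:ℝ)+1) * ε * ((b-a)*((N:ℝ)+1))^N := by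
    rw [hP] at h1
    have hmN : (0:ℝ) < m^N := by positivity
    have := mul_le_mul_of_nonneg_right h1 hmN.le
    rw [one_mul] at this
    calc m^N ≤ ((N:ℝ)+1) * ε * (((b-a)*((N:ℝ)+1))^N / m^N) * m^N := this
      _ = ((N:ℝ)+1) * ε * ((b-a)*((N:ℝ)+1))^N := by field_simp
  have hRpow : R^N = (((N:ℝ)+1)^(2*N)) * ((b-a)^N * ε) := by
    rw [hR, mul_pow, mul_pow, ← pow_mul]
    have : (ε ^ ((1:ℝ)/(N:ℝ)))^N = ε := by
      rw [← Real.rpow_natCast (ε ^ ((1:ℝ)/(N:ℝ))) N, ← Real.rpow_mul hε.le]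
      rw [show (1:ℝ)/(N:ℝ) * (N:ℝ) = 1 by
        field_simp]
      exact Real.rpow_one ε
    rw [this]; ring
  have hc1 : m^N ≤ R^N := by
    rw [hRpow]
    calc m^N ≤ ((N:ℝ)+1) * ε * ((b-a)*((N:ℝ)+1))^N := h2
      _ = ((N:ℝ)+1)^(N+1) * ((b-a)^N * ε) := by rw [mul_pow, pow_succ]; ring
      _ ≤ ((N:ℝ)+1)^(2*N) * ((b-a)^N * ε) := by
          apply mul_le_mul_of_nonneg_right
          · apply pow_le_pow_right₀ (by push_cast; linarith)
            omega
          · have hba : (0:ℝ) ≤ b - a := by linarith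
            positivity
  have hc2 : R^N < m^N := pow_lt_pow_left₀ hm hRnn (by omega)
  linarith

noncomputable def linePoly {n : ℕ} (P : MvPolynomial (Fin n) ℝ) (z v : Fin n → ℝ) :
    Polynomial ℝ :=
  MvPolynomial.aeval (fun i => Polynomial.C (z i) + Polynomial.C (v i) * Polynomial.X) P

lemma linePoly_eval {n : ℕ} (P : MvPolynomial (Fin n) ℝ) (z v : Fin n → ℝ) (r : ℝ) :
    (linePoly P z v).eval r = MvPolynomial.eval (fun i => z i + r * v i) P := by
  rw [linePoly]
  have h := MvPolynomial.comp_aeval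
    (φ := Polynomial.aeval r)
    (f := fun i : Fin n => Polynomial.C (z i) + Polynomial.C (v i) * Polynomial.X)
  have h2 := congrFun (congrArg DFunLike.coe h) P
  simp only [AlgHom.comp_apply] at h2
  have e1 : Polynomial.eval r ((MvPolynomial.aeval
      (fun i : Fin n => Polynomial.C (z i) + Polynomial.C (v i) * Polynomial.X)) P) =
      Polynomial.aeval r ((MvPolynomial.aeval
      (fun i : Fin n => Polynomial.C (z i) + Polynomial.C (v i) * Polynomial.X)) P) := by
    rw [Polynomial.aeval_def, Polynomial.eval₂_eq_eval_map]
    simp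
  rw [e1, h2]
  simp only [map_add, map_mul, Polynomial.aeval_C, Polynomial.aeval_X]
  have e2 : (fun i : Fin n => (algebraMap ℝ ℝ) (z i) + (algebraMap ℝ ℝ) (v i) * r)
      = fun i => z i + r * v i := by
    funext i; simp [mul_comm]
  have e3 := congrFun (congrArg DFunLike.coe
    (MvPolynomial.coe_aeval_eq_eval (f := fun i : Fin n => z i + r * v i))) P
  rw [e2]
  exact e3

lemma linePoly_natDegree {n N : ℕ} (P : MvPolynomial (Fin n) ℝ) (hP : P.totalDegree ≤ N)
    (z v : Fin n → ℝ) : (linePoly P z v).natDegree ≤ N := by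
  rw [linePoly, MvPolynomial.aeval_def, MvPolynomial.eval₂_eq]
  apply (Polynomial.natDegree_sum_le _ _).trans
  rw [Finset.fold_max_le]
  refine ⟨Nat.zero_le _, fun d hd => ?_⟩
  apply (Polynomial.natDegree_C_mul_le _ _).trans
  apply (Polynomial.natDegree_prod_le _ _).trans
  calc ∑ i ∈ d.support, (((Polynomial.C (z i) + Polynomial.C (v i) * Polynomial.X)) ^ d i).natDegree
      ≤ ∑ i ∈ d.support, d i := by
        apply Finset.sum_le_sum
        intro i _
        apply (Polynomial.natDegree_pow_le).trans
        have : (Polynomial.C (z i) + Polynomial.C (v i) * Polynomial.X).natDegree ≤ 1 := by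
          apply (Polynomial.natDegree_add_le _ _).trans
          simp [Polynomial.natDegree_C]
          exact (Polynomial.natDegree_C_mul_le _ _).trans (by simp)
        calc d i * (Polynomial.C (z i) + Polynomial.C (v i) * Polynomial.X).natDegree
            ≤ d i * 1 := Nat.mul_le_mul_left _ this
          _ = d i := Nat.mul_one _
    _ ≤ P.totalDegree := MvPolynomial.le_totalDegree hd
    _ ≤ N := hP

/-- Sublevel set estimate for polynomials of degree at most `N` on the unit cube. -/
theorem stmt4 (n N : ℕ) :
    ∃ C : ℝ, 0 < C ∧ ∀ (P : MvPolynomial (Fin n) ℝ), P.totalDegree ≤ N →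
      ∀ ε : ℝ, 0 < ε → ε ≤ 1 →
      volume {t : Fin n → ℝ |
          t ∈ Set.pi Set.univ (fun _ : Fin n => Set.Icc (-1 : ℝ) 1) ∧
          |MvPolynomial.eval t P| <
            ε * sSup ((fun t => |MvPolynomial.eval t P|) ''
              Set.pi Set.univ (fun _ : Fin n => Set.Icc (-1 : ℝ) 1))} ≤
        ENNReal.ofReal (C * ε ^ (1 / C)) := by
  induction n with
  | zero =>
    refine ⟨1, one_pos, fun P hP ε hε hε1 => ?_⟩
    have hempty : {t : Fin 0 → ℝ |
        t ∈ Set.pi Set.univ (fun _ : Fin 0 => Set.Icc (-1 : ℝ) 1) ∧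
        |MvPolynomial.eval t P| <
          ε * sSup ((fun t => |MvPolynomial.eval t P|) ''
            Set.pi Set.univ (fun _ : Fin 0 => Set.Icc (-1 : ℝ) 1))} = ∅ := by
      ext t
      simp only [Set.mem_setOf_eq, Set.mem_empty_iff_false, iff_false, not_and]
      intro htQ
      have himg : ((fun t => |MvPolynomial.eval t P|) ''
          Set.pi Set.univ (fun _ : Fin 0 => Set.Icc (-1 : ℝ) 1)) = {|MvPolynomial.eval t P|} := by
        ext y
        constructor
        · rintro ⟨t', _, rfl⟩
          have : t' = t := funext fun i => Fin.elim0 i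
          simp [this]
        · rintro rfl
          exact ⟨t, htQ, rfl⟩
      rw [himg, csSup_singleton]
      have := abs_nonneg (MvPolynomial.eval t P)
      nlinarith
    rw [hempty]
    simp

  | succ m _ =>
    set N' : ℕ := max N 1 with hNd'
    have hN' : 1 ≤ N' := le_max_right _ _
    have hN'pos : (0:ℝ) < (N':ℝ) := by exact_mod_cast hN'
    set K : ℝ := 2^m * (((N':ℝ)+1)^2 * (2 - 0)) * (((m:ℝ)+1) * 2^(m+1)) with hK
    have hKpos : 0 < K := by positivity
    set C : ℝ := max K (N':ℝ) with hC
    have hCpos : 0 < C := lt_max_of_lt_left hKpos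
    refine ⟨C, hCpos, fun P hP ε hε hε1 => ?_⟩
    set Q := Set.pi Set.univ (fun _ : Fin (m+1) => Set.Icc (-1:ℝ) 1) with hQdef
    set g := fun t : Fin (m+1) → ℝ => |MvPolynomial.eval t P| with hg
    set M := sSup (g '' Q) with hMdef
    have hQc : IsCompact Q := isCompact_univ_pi fun _ => isCompact_Icc
    have hQne : Q.Nonempty := ⟨fun _ => 0, fun i _ => by norm_num⟩
    have hgc : Continuous g := (MvPolynomial.continuous_eval P).abs
    obtain ⟨z, hzQ, hzmax'⟩ := hQc.exists_isMaxOn hQne hgc.continuousOn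
    have hzmax : ∀ t ∈ Q, g t ≤ g z := fun t ht => hzmax' ht
    have hMz : M = g z := by
      apply IsGreatest.csSup_eq
      exact ⟨⟨z, hzQ, rfl⟩, by rintro y ⟨t, htQ, rfl⟩; exact hzmax t htQ⟩
    set Bd := {t : Fin (m+1) → ℝ | t ∈ Q ∧ g t < ε * M} with hBd
    show volume Bd ≤ ENNReal.ofReal (C * ε ^ (1 / C))
    have hBdm : MeasurableSet Bd := by
      have : Bd = Q ∩ g ⁻¹' Set.Iio (ε * M) := rfl
      rw [this]
      exact ((isClosed_set_pi fun i _ => isClosed_Icc).measurableSet).inter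
        (hgc.measurable measurableSet_Iio)
    set A := (fun x => z + x) ⁻¹' Bd with hA
    have hvolA : volume Bd = volume A := (measure_preimage_add volume z Bd).symm
    have hAm : MeasurableSet A := hBdm.preimage (measurable_const.add measurable_id)
    have hA2 : ∀ x ∈ A, ‖x‖ ≤ 2 := by
      intro x hx
      have h1 : z + x ∈ Q := hx.1
      refine (pi_norm_le_iff_of_nonneg (by norm_num)).2 fun i => ?_
      have h2 := h1 i (Set.mem_univ i)
      have h3 := hzQ i (Set.mem_univ i)
      simp only [Pi.add_apply, Set.mem_Icc] at h2 h3
      rw [Real.norm_eq_abs, abs_le]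
      constructor <;> linarith [h2.1, h2.2, h3.1, h3.2]
    have hzero : volume ({0} : Set (Fin (m+1) → ℝ)) = 0 := by
      have h01 : ({0} : Set (Fin (m+1) → ℝ)) = Set.pi Set.univ (fun _ => ({0} : Set ℝ)) := by
        ext x
        simp [funext_iff, Set.mem_pi]
      rw [h01, volume_pi_pi]
      simp
    have hAdiff : volume A = volume (A \ {0}) := (measure_diff_null hzero).symm
    set s₀ := (Subtype.val : ({0}ᶜ : Set (Fin (m+1) → ℝ)) → (Fin (m+1) → ℝ)) ⁻¹' A with hs₀
    have hs₀m : MeasurableSet s₀ := measurable_subtype_coe hAm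
    have hemb : MeasurableEmbedding
        (Subtype.val : ({0}ᶜ : Set (Fin (m+1) → ℝ)) → (Fin (m+1) → ℝ)) :=
      MeasurableEmbedding.subtype_coe (measurableSet_singleton 0).compl
    have himg : Subtype.val '' s₀ = A \ {0} := by
      rw [hs₀, Subtype.image_preimage_coe, Set.diff_eq, Set.inter_comm]
    have hcomap : (volume.comap Subtype.val) s₀ = volume (A \ {0}) := by
      rw [hemb.comap_apply, himg]
    have hdim : Module.finrank ℝ (Fin (m+1) → ℝ) = m + 1 := Module.finrank_fin_fun ℝ
    have hmp := (volume : Measure (Fin (m+1) → ℝ)).measurePreserving_homeomorphUnitSphereProd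
    rw [hdim, Nat.add_sub_cancel] at hmp
    set Φ := homeomorphUnitSphereProd (Fin (m+1) → ℝ) with hΦ
    set T := Φ '' s₀ with hT
    have hTm : MeasurableSet T := Φ.measurableEmbedding.measurableSet_image.2 hs₀m
    have hpre : Φ ⁻¹' T = s₀ := Set.preimage_image_eq s₀ Φ.injective
    have hmap : ((volume : Measure (Fin (m+1) → ℝ)).toSphere.prod
        (Measure.volumeIoiPow m)) T = (volume.comap Subtype.val) s₀ := by
      rw [← hmp.map_eq, Measure.map_apply Φ.continuous.measurable hTm, hpre]
    have hNley : P.totalDegree ≤ N' := hP.trans (le_max_left N 1)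
    have hfiber : ∀ ω : Metric.sphere (0 : Fin (m+1) → ℝ) 1,
        (Measure.volumeIoiPow m) (Prod.mk ω ⁻¹' T) ≤
          ENNReal.ofReal (2^m) *
            ENNReal.ofReal (((N':ℝ)+1)^2 * (2 - 0) * ε ^ ((1:ℝ)/(N':ℝ))) := by
      intro ω
      have hωn : ‖(ω : Fin (m+1) → ℝ)‖ = 1 := norm_eq_of_mem_sphere ω
      have hfib_mem : ∀ r : Set.Ioi (0:ℝ), (ω, r) ∈ T → (r : ℝ) • (ω : Fin (m+1) → ℝ) ∈ A := by
        rintro r ⟨y, hy, hΦy⟩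
        have hyval : (y : Fin (m+1) → ℝ) = (r : ℝ) • (ω : Fin (m+1) → ℝ) := by
          have h5 : y = Φ.symm (ω, r) := by rw [← hΦy, Homeomorph.symm_apply_apply]
          rw [h5, hΦ]
          simp
        rw [← hyval]
        exact hy
      have hfib_sub : Subtype.val '' (Prod.mk ω ⁻¹' T) ⊆
          {x | x ∈ Set.Icc (0:ℝ) 2 ∧
            |(linePoly P z ω.1).eval x| < ε * |(linePoly P z ω.1).eval 0|} := by
        rintro x ⟨r, hr, rfl⟩
        have hrA := hfib_mem r hr
        have hrpos : (0:ℝ) < r := r.2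
        have hr2 : (r:ℝ) ≤ 2 := by
          have hnorm := hA2 _ hrA
          rw [norm_smul, hωn, mul_one, Real.norm_eq_abs, abs_of_pos hrpos] at hnorm
          exact hnorm
        refine ⟨⟨hrpos.le, hr2⟩, ?_⟩
        have he1 : (linePoly P z ω.1).eval (r:ℝ) =
            MvPolynomial.eval (z + (r:ℝ) • (ω : Fin (m+1) → ℝ)) P := by
          rw [linePoly_eval, show (fun i => z i + (r:ℝ) * (ω : Fin (m+1) → ℝ) i)
            = z + (r:ℝ) • (ω : Fin (m+1) → ℝ) from funext fun i => by
              simp [mul_comm]]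
        have he0 : (linePoly P z ω.1).eval 0 = MvPolynomial.eval z P := by
          rw [linePoly_eval, show (fun i => z i + (0:ℝ) * (ω : Fin (m+1) → ℝ) i)
            = z from funext fun i => by simp]
        have hBdmem : z + (r:ℝ) • (ω : Fin (m+1) → ℝ) ∈ Bd := hrA
        have hlt : g (z + (r:ℝ) • (ω : Fin (m+1) → ℝ)) < ε * M := hBdmem.2
        rw [he1, he0]
        calc |MvPolynomial.eval (z + (r:ℝ) • (ω : Fin (m+1) → ℝ)) P| < ε * M := hlt
          _ = ε * |MvPolynomial.eval z P| := by rw [hMz]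
      have hfibm : MeasurableSet (Prod.mk ω ⁻¹' T) := measurable_prodMk_left hTm
      rw [Measure.volumeIoiPow, withDensity_apply _ hfibm]
      have hembIoi : MeasurableEmbedding (Subtype.val : Set.Ioi (0:ℝ) → ℝ) :=
        MeasurableEmbedding.subtype_coe measurableSet_Ioi
      calc ∫⁻ r in Prod.mk ω ⁻¹' T, ENNReal.ofReal ((r:ℝ)^m) ∂(volume.comap Subtype.val)
          ≤ ∫⁻ _r in Prod.mk ω ⁻¹' T, ENNReal.ofReal (2^m) ∂(volume.comap Subtype.val) := by
            apply setLIntegral_mono measurable_const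
            intro r hrmem
            apply ENNReal.ofReal_le_ofReal
            have hx2 : (r:ℝ) ∈ Set.Icc (0:ℝ) 2 := (hfib_sub ⟨r, hrmem, rfl⟩).1
            exact pow_le_pow_left₀ hx2.1 hx2.2 m
        _ = ENNReal.ofReal (2^m) * (volume.comap Subtype.val) (Prod.mk ω ⁻¹' T) :=
            setLIntegral_const _ _
        _ ≤ ENNReal.ofReal (2^m) *
              ENNReal.ofReal (((N':ℝ)+1)^2 * (2 - 0) * ε ^ ((1:ℝ)/(N':ℝ))) := by
            apply mul_le_mul_right
            rw [hembIoi.comap_apply]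
            refine (measure_mono hfib_sub).trans ?_
            have h0mem : (0:ℝ) ∈ Set.Icc (0:ℝ) 2 := by norm_num
            exact remez1d N' hN' (linePoly P z ω.1)
              (linePoly_natDegree P hNley z ω.1) 0 2 0 h0mem ε hε
    have hball : volume (Metric.ball (0 : Fin (m+1) → ℝ) 1) ≤ ENNReal.ofReal (2^(m+1)) := by
      have hsub : Metric.ball (0 : Fin (m+1) → ℝ) 1 ⊆
          Set.pi Set.univ (fun _ => Set.Icc (-1:ℝ) 1) := by
        intro x hx i _
        have h6 : ‖x‖ < 1 := by rwa [mem_ball_zero_iff] at hx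
        have h7 : |x i| ≤ ‖x‖ := by
          rw [← Real.norm_eq_abs]; exact norm_le_pi_norm x i
        have h8 := abs_le.1 (lt_of_le_of_lt h7 h6).le
        simp only [Set.mem_Icc]
        constructor <;> linarith [h8.1, h8.2]
      refine (measure_mono hsub).trans_eq ?_
      rw [volume_pi_pi]
      simp only [Real.volume_Icc, show (1:ℝ) - (-1) = 2 by norm_num]
      rw [Finset.prod_const, Finset.card_univ, Fintype.card_fin,
        ← ENNReal.ofReal_pow (by norm_num : (0:ℝ) ≤ 2)]
    have hsph : (volume : Measure (Fin (m+1) → ℝ)).toSphere Set.univ ≤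
        (↑(m+1) : ENNReal) * ENNReal.ofReal (2^(m+1)) := by
      rw [Measure.toSphere_apply_univ, hdim]
      exact mul_le_mul_right hball _
    have hrNnn : (0:ℝ) ≤ ε ^ ((1:ℝ)/(N':ℝ)) := Real.rpow_nonneg hε.le _
    calc volume Bd = ((volume : Measure (Fin (m+1) → ℝ)).toSphere.prod
          (Measure.volumeIoiPow m)) T := by
          rw [hvolA, hAdiff, ← hcomap, ← hmap]
      _ = ∫⁻ ω, (Measure.volumeIoiPow m) (Prod.mk ω ⁻¹' T)
            ∂(volume : Measure (Fin (m+1) → ℝ)).toSphere := Measure.prod_apply hTm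
      _ ≤ ∫⁻ _ω, (ENNReal.ofReal (2^m) *
            ENNReal.ofReal (((N':ℝ)+1)^2 * (2 - 0) * ε ^ ((1:ℝ)/(N':ℝ))))
            ∂(volume : Measure (Fin (m+1) → ℝ)).toSphere := lintegral_mono fun ω => hfiber ω
      _ = (ENNReal.ofReal (2^m) *
            ENNReal.ofReal (((N':ℝ)+1)^2 * (2 - 0) * ε ^ ((1:ℝ)/(N':ℝ)))) *
            (volume : Measure (Fin (m+1) → ℝ)).toSphere Set.univ := lintegral_const _
      _ ≤ (ENNReal.ofReal (2^m) *
            ENNReal.ofReal (((N':ℝ)+1)^2 * (2 - 0) * ε ^ ((1:ℝ)/(N':ℝ)))) *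
            ((↑(m+1) : ENNReal) * ENNReal.ofReal (2^(m+1))) := mul_le_mul_right hsph _
      _ = ENNReal.ofReal (K * ε ^ ((1:ℝ)/(N':ℝ))) := by
          rw [← ENNReal.ofReal_natCast (m+1)]
          rw [← ENNReal.ofReal_mul (by positivity), ← ENNReal.ofReal_mul (by positivity),
            ← ENNReal.ofReal_mul (by positivity)]
          congr 1
          push_cast
          rw [hK]
          ring
      _ ≤ ENNReal.ofReal (C * ε ^ (1 / C)) := by
          apply ENNReal.ofReal_le_ofReal
          have hexp : ε ^ ((1:ℝ)/(N':ℝ)) ≤ ε ^ (1 / C) := by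
            apply Real.rpow_le_rpow_of_exponent_ge hε hε1
            apply one_div_le_one_div_of_le hN'pos
            exact le_max_right K (N':ℝ)
          exact mul_le_mul (le_max_left K (N':ℝ)) hexp hrNnn hCpos.le
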